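/- Let φ₁, φ₂ : ℝᵖ → ℝ ∪ {∞} be proper, lsc, convex. Given γ* > 0, λ* > 0 and s* ∈ ℝᵖ, define the dual DRS update u* = prox_{γ* φ₁*}(s*), v* = prox_{γ* φ₂*}(2u* − s*), s*⁺ = s* + λ*(v* − u*), where φ₁* = (φ₁(−·))* and φ₂* = φ₂*. Set γ = 1/γ*, λ = λ*, s = −s*/γ* and define the primal DRS update u = prox_{γφ₁}(s), v = prox_{γφ₂}(2u − s), s⁺ = s + λ(v − u). Then u = (u* − s*)/γ*, v = (2u* − s* − v*)/γ*, and s⁺ = −s*⁺/γ*. -/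

import Mathlib

open scoped RealInnerProductSpace
open Filter Topology

/-- The convex (Fenchel) conjugate of an extended-real-valued function. -/
noncomputable def eConj {n : ℕ} (h : EuclideanSpace ℝ (Fin n) → EReal)
    (y : EuclideanSpace ℝ (Fin n)) : EReal :=
  ⨆ x, ((⟪y, x⟫ : ℝ) : EReal) - h x

/-- `h` is proper: nowhere `⊥` and not identically `⊤`. -/
def ProperFn {n : ℕ} (h : EuclideanSpace ℝ (Fin n) → EReal) : Prop :=
  (∃ x, h x ≠ ⊤) ∧ ∀ x, h x ≠ ⊥

/-- Convexity for extended-real-valued functions. -/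
def EConvexOn {n : ℕ} (h : EuclideanSpace ℝ (Fin n) → EReal) : Prop :=
  ∀ x y : EuclideanSpace ℝ (Fin n), ∀ a b : ℝ, 0 ≤ a → 0 ≤ b → a + b = 1 →
    h (a • x + b • y) ≤ (a : EReal) * h x + (b : EReal) * h y

/-- `u ∈ prox_{γ h}(x)` for an extended-real-valued `h`. -/
def IsProx {n : ℕ} (h : EuclideanSpace ℝ (Fin n) → EReal) (γ : ℝ)
    (x u : EuclideanSpace ℝ (Fin n)) : Prop :=
  ∀ w, h u + ((‖u - x‖ ^ 2 / (2 * γ) : ℝ) : EReal) ≤ h w + ((‖w - x‖ ^ 2 / (2 * γ) : ℝ) : EReal)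

/-- `u = prox_{γ h}(x)` for a real-valued `h`. -/
def IsProxR {n : ℕ} (h : EuclideanSpace ℝ (Fin n) → ℝ) (γ : ℝ)
    (x u : EuclideanSpace ℝ (Fin n)) : Prop :=
  ∀ w, h u + ‖u - x‖ ^ 2 / (2 * γ) ≤ h w + ‖w - x‖ ^ 2 / (2 * γ)

/-- The Moreau envelope `h^γ`. -/
noncomputable def moreauEnv {n : ℕ} (h : EuclideanSpace ℝ (Fin n) → EReal) (γ : ℝ)
    (x : EuclideanSpace ℝ (Fin n)) : EReal :=
  ⨅ w, h w + ((‖w - x‖ ^ 2 / (2 * γ) : ℝ) : EReal)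

/-- The Douglas–Rachford envelope value at `s`, given the prox points `u, v`. -/
noncomputable def dre {n : ℕ} (φ₁ φ₂ : EuclideanSpace ℝ (Fin n) → EReal) (γ : ℝ)
    (s u v : EuclideanSpace ℝ (Fin n)) : EReal :=
  φ₁ u + φ₂ v + (((1 / γ) * ⟪s - u, v - u⟫ + ‖v - u‖ ^ 2 / (2 * γ) : ℝ) : EReal)

/-- `v` belongs to the regular (Fréchet) subdifferential of `h` at `x̄`. -/
def RegSubdiffAt {n : ℕ} (h : EuclideanSpace ℝ (Fin n) → EReal)
    (xbar v : EuclideanSpace ℝ (Fin n)) : Prop :=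
  ∀ ε : ℝ, 0 < ε → ∀ᶠ x in nhds xbar,
    h xbar + ((⟪v, x - xbar⟫ - ε * ‖x - xbar‖ : ℝ) : EReal) ≤ h x

/-- `μ`-strong convexity for extended-real-valued functions. -/
def EStrongConvexOn {n : ℕ} (μ : ℝ) (h : EuclideanSpace ℝ (Fin n) → EReal) : Prop :=
  EConvexOn (fun x => h x - ((μ / 2 * ‖x‖ ^ 2 : ℝ) : EReal))

lemma prox_subgrad {n : ℕ} (φ : EuclideanSpace ℝ (Fin n) → EReal)
    (hp : ProperFn φ) (hc : EConvexOn φ) (γ : ℝ) (hγ : 0 < γ)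
    (s u : EuclideanSpace ℝ (Fin n)) (hu : IsProx φ γ s u) :
    ∃ r : ℝ, φ u = (r : EReal) ∧
      ∀ w, ((r + ⟪γ⁻¹ • (s - u), w - u⟫ : ℝ) : EReal) ≤ φ w := by
  obtain ⟨x₀, hx₀⟩ := hp.1
  obtain ⟨r₀, hr₀⟩ : ∃ r : ℝ, φ x₀ = r := by
    lift φ x₀ to ℝ using ⟨hx₀, hp.2 x₀⟩ with r; exact ⟨r, rfl⟩
  have hutop : φ u ≠ ⊤ := by
    intro h
    have h2 := hu x₀
    rw [h, hr₀, ← EReal.coe_add, EReal.top_add_of_ne_bot (EReal.coe_ne_bot _)] at h2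
    exact absurd h2 (not_le.mpr (EReal.coe_lt_top _))
  obtain ⟨r, hr⟩ : ∃ r : ℝ, φ u = r := by
    lift φ u to ℝ using ⟨hutop, hp.2 u⟩ with r; exact ⟨r, rfl⟩
  refine ⟨r, hr, fun w => ?_⟩
  rcases eq_or_ne (φ w) ⊤ with hw | hw
  · rw [hw]; exact le_top
  obtain ⟨r', hr'⟩ : ∃ r' : ℝ, φ w = r' := by
    lift φ w to ℝ using ⟨hw, hp.2 w⟩ with r'; exact ⟨r', rfl⟩
  rw [hr', EReal.coe_le_coe_iff]
  have h2γ : (0:ℝ) < 2*γ := by linarith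
  set I : ℝ := ⟪u - s, w - u⟫ with hI
  set N : ℝ := ‖w - u‖^2 with hN
  have hN0 : 0 ≤ N := by rw [hN]; positivity
  -- key inequality for each t ∈ (0,1]
  have key : ∀ t : ℝ, 0 < t → t ≤ 1 → r - r' ≤ (2 * I + t * N) / (2*γ) := by
    intro t ht ht1
    have hconv := hc w u t (1-t) ht.le (by linarith) (by ring)
    rw [hr, hr', ← EReal.coe_mul, ← EReal.coe_mul, ← EReal.coe_add] at hconv
    have hprox := hu (t • w + (1-t) • u)
    rw [hr] at hprox
    have hchain := hprox.trans (add_le_add hconv le_rfl)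
    rw [← EReal.coe_add, ← EReal.coe_add, EReal.coe_le_coe_iff] at hchain
    have hvec : t • w + (1-t) • u - s = (u - s) + t • (w - u) := by module
    have hnorm : ‖t • w + (1-t) • u - s‖^2
        = ‖u - s‖^2 + 2 * (t * I) + t^2 * N := by
      rw [hvec, norm_add_sq_real, real_inner_smul_right, norm_smul]
      simp [abs_of_pos ht, hI, hN]; ring
    rw [hnorm] at hchain
    have h3 : t*(r - r') ≤ (2*(t*I) + t^2*N)/(2*γ) := by
      have e : (‖u - s‖^2 + 2*(t*I) + t^2*N)/(2*γ)
          = ‖u - s‖^2/(2*γ) + (2*(t*I) + t^2*N)/(2*γ) := by ring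
      rw [e] at hchain; linarith
    rw [le_div_iff₀ h2γ] at h3 ⊢
    have h4 : t * ((r - r')*(2*γ)) ≤ t * (2*I + t*N) := by nlinarith [h3]
    exact le_of_mul_le_mul_left h4 ht
  -- take t → 0
  have lim : r - r' ≤ 2 * I / (2*γ) := by
    by_contra hcon
    push_neg at hcon
    have hδpos : 0 < (r - r') - 2*I/(2*γ) := by linarith
    set δ : ℝ := (r - r') - 2*I/(2*γ) with hδ
    set t : ℝ := min 1 (δ * (2*γ) / (N + 1)) with htdef
    have htpos : 0 < t := lt_min one_pos (by positivity)
    have ht1 : t ≤ 1 := min_le_left _ _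
    have hk := key t htpos ht1
    have h5 : δ ≤ t*N/(2*γ) := by
      have e1 : (2*I + t*N)/(2*γ) = 2*I/(2*γ) + t*N/(2*γ) := by ring
      linarith [hk.trans_eq e1]
    have h6 : t*N/(2*γ) < t*(N+1)/(2*γ) := by gcongr; linarith
    have h7 : t*(N+1)/(2*γ) ≤ δ := by
      rw [div_le_iff₀ h2γ]
      calc t*(N+1) ≤ (δ * (2*γ) / (N + 1)) * (N+1) :=
            mul_le_mul_of_nonneg_right (min_le_right _ _) (by positivity)
        _ = δ * (2*γ) := by field_simp
    linarith
  have hip : ⟪γ⁻¹ • (s - u), w - u⟫ = - (I / γ) := by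
    rw [real_inner_smul_left]
    have e : (s - u : EuclideanSpace ℝ (Fin n)) = -(u - s) := by module
    rw [e, inner_neg_left, hI]
    field_simp
  rw [hip]
  have e2 : 2 * I / (2*γ) = I / γ := by field_simp
  linarith [lim.trans_eq e2]

lemma conj_prox_unique {n : ℕ} (f : EuclideanSpace ℝ (Fin n) → EReal)
    (γs : ℝ) (hγs : 0 < γs) (x₀ t p' : EuclideanSpace ℝ (Fin n)) (r : ℝ)
    (hfx₀ : f x₀ = (r : EReal))
    (hsub : ∀ x, ((r + ⟪t - γs • x₀, x - x₀⟫ : ℝ) : EReal) ≤ f x)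
    (hp' : IsProx (eConj f) γs t p') : p' = t - γs • x₀ := by
  set q : EuclideanSpace ℝ (Fin n) := t - γs • x₀ with hq
  -- lower bound for eConj f at any w
  have hlow : ∀ w, ((⟪w, x₀⟫ - r : ℝ) : EReal) ≤ eConj f w := by
    intro w
    have : ((⟪w, x₀⟫ : ℝ) : EReal) - f x₀ = ((⟪w, x₀⟫ - r : ℝ) : EReal) := by
      rw [hfx₀, ← EReal.coe_sub]
    exact this ▸ le_iSup (fun x => ((⟪w, x⟫ : ℝ) : EReal) - f x) x₀
  -- exact value at q
  have hval : eConj f q = ((⟪q, x₀⟫ - r : ℝ) : EReal) := by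
    refine le_antisymm (iSup_le fun x => ?_) (hlow q)
    have h1 : ((⟪q, x⟫ : ℝ) : EReal) - f x
        ≤ ((⟪q, x⟫ : ℝ) : EReal) - ((r + ⟪q, x - x₀⟫ : ℝ) : EReal) :=
      EReal.sub_le_sub le_rfl (hsub x)
    refine h1.trans ?_
    rw [← EReal.coe_sub, EReal.coe_le_coe_iff, inner_sub_right]
    ring_nf
    exact le_rfl
  -- compare
  have h2 := hp' q
  rw [hval, ← EReal.coe_add] at h2
  have h3 : ((⟪p', x₀⟫ - r + ‖p' - t‖^2/(2*γs) : ℝ) : EReal)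
      ≤ eConj f p' + ((‖p' - t‖^2/(2*γs) : ℝ) : EReal) := by
    rw [EReal.coe_add]
    exact add_le_add (hlow p') le_rfl
  have h4 := (h3.trans h2)
  rw [EReal.coe_le_coe_iff] at h4
  -- strict convexity identity
  have hexp : ‖p' - t‖^2 = ‖p' - q‖^2 + 2 * (γs * (⟪q, x₀⟫ - ⟪p', x₀⟫)) + ‖q - t‖^2 := by
    have e : (p' - t : EuclideanSpace ℝ (Fin n)) = (p' - q) + (q - t) := by module
    rw [e, norm_add_sq_real]
    have e2 : (q - t : EuclideanSpace ℝ (Fin n)) = -(γs • x₀) := by rw [hq]; module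
    congr 1
    rw [e2, inner_neg_right, real_inner_smul_right, inner_sub_left]
    ring
  have hfin : ‖p' - q‖^2 / (2*γs) ≤ 0 := by
    rw [hexp] at h4
    have : (‖p' - q‖^2 + 2*(γs*(⟪q,x₀⟫ - ⟪p',x₀⟫)) + ‖q - t‖^2)/(2*γs)
        = ‖p' - q‖^2/(2*γs) + (⟪q,x₀⟫ - ⟪p',x₀⟫) + ‖q - t‖^2/(2*γs) := by
      field_simp
    rw [this] at h4; linarith
  have : ‖p' - q‖^2 ≤ 0 := by
    by_contra hcc; push_neg at hcc
    have : 0 < ‖p' - q‖^2 / (2*γs) := by positivity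
    linarith
  have : p' - q = 0 := by
    have := le_antisymm this (by positivity)
    simpa [pow_eq_zero_iff] using norm_eq_zero.mp (by nlinarith [norm_nonneg (p' - q)])
  exact sub_eq_zero.mp this

/-- Self-duality of the Douglas–Rachford splitting iteration. -/
theorem drs_self_dual {n : ℕ} (φ₁ φ₂ : EuclideanSpace ℝ (Fin n) → EReal)
    (h1p : ProperFn φ₁) (h1l : LowerSemicontinuous φ₁) (h1c : EConvexOn φ₁)
    (h2p : ProperFn φ₂) (h2l : LowerSemicontinuous φ₂) (h2c : EConvexOn φ₂)
    (γs lams : ℝ) (hγs : 0 < γs) (hlams : 0 < lams)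
    (sstar ustar vstar u v : EuclideanSpace ℝ (Fin n))
    -- dual DRS update with stepsize γ*, where φ₁* = (φ₁(−·))* and φ₂* = φ₂*
    (hustar : IsProx (eConj (fun x => φ₁ (-x))) γs sstar ustar)
    (hvstar : IsProx (eConj φ₂) γs ((2 : ℝ) • ustar - sstar) vstar)
    -- primal DRS update with stepsize γ = 1/γ* at s = −s*/γ*
    (hu : IsProx φ₁ (1 / γs) (-(γs⁻¹ • sstar)) u)
    (hv : IsProx φ₂ (1 / γs) ((2 : ℝ) • u - -(γs⁻¹ • sstar)) v) :
    u = γs⁻¹ • (ustar - sstar) ∧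
    v = γs⁻¹ • ((2 : ℝ) • ustar - sstar - vstar) ∧
    -(γs⁻¹ • sstar) + lams • (v - u) = -(γs⁻¹ • (sstar + lams • (vstar - ustar))) := by
  -- subgradient inequalities from the primal prox updates
  obtain ⟨r₁, hru, hsub₁⟩ := prox_subgrad φ₁ h1p h1c (1/γs) (by positivity) _ u hu
  obtain ⟨r₂, hrv, hsub₂⟩ := prox_subgrad φ₂ h2p h2c (1/γs) (by positivity) _ v hv
  -- identify u* via Moreau-type duality
  have hust : ustar = sstar - γs • (-u) := by
    refine conj_prox_unique (fun x => φ₁ (-x)) γs hγs (-u) sstar ustar r₁ ?_ ?_ hustar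
    · show φ₁ (-(-u)) = _; rw [neg_neg]; exact hru
    · intro x
      have h := hsub₁ (-x)
      have hvec : (1/γs)⁻¹ • ((-(γs⁻¹ • sstar)) - u) = -(sstar - γs • (-u)) := by
        rw [one_div, inv_inv]
        match_scalars <;> field_simp
      have hneg : (-x - u : EuclideanSpace ℝ (Fin n)) = -(x - (-u)) := by module
      rwa [hvec, hneg, inner_neg_neg] at h
  have hu1 : u = γs⁻¹ • (ustar - sstar) := by
    rw [hust]; match_scalars <;> (field_simp; try ring)
  -- identify v* via Moreau-type duality
  have hvst : vstar = ((2:ℝ) • ustar - sstar) - γs • v := by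
    refine conj_prox_unique φ₂ γs hγs v ((2:ℝ) • ustar - sstar) vstar r₂ hrv ?_ hvstar
    intro x
    have h := hsub₂ x
    have hvec : (1/γs)⁻¹ • (((2:ℝ) • u - -(γs⁻¹ • sstar)) - v)
        = ((2:ℝ) • ustar - sstar) - γs • v := by
      rw [one_div, inv_inv, hust]
      match_scalars <;> field_simp <;> ring
    rwa [hvec] at h
  have hv1 : v = γs⁻¹ • ((2:ℝ) • ustar - sstar - vstar) := by
    rw [hvst]; match_scalars <;> (field_simp; try ring)
  refine ⟨hu1, hv1, ?_⟩
  rw [hu1, hv1]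
  module
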